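/- In the construction of Theorem 1 (adaptivity gap), the adaptive binary-search policy achieves zero expected 0/1 loss with expected cost log₂(N) for any prior with full support, whereas any policy with expected cost strictly less than N−1 that is non-adaptive cannot achieve zero expected loss; hence c(π_nonadapt)/c(π_adapt) = (N−1)/log₂(N) → ∞ as N → ∞. -/

import Mathlib

/-- Feature `F_{j,b}` in the construction of Theorem 1 with `N = 2^k` hypotheses
(0-indexed): indicator of membership in the first half of the `b`-th block of size
`2^(k-j+1)` at level `j`. -/
def feat (k j b h : ℕ) : Bool :=
  decide (b * 2 ^ (k - j + 1) ≤ h ∧ h < b * 2 ^ (k - j + 1) + 2 ^ (k - j))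

/-- An adaptive policy: a binary decision tree querying features. -/
inductive DTree where
  | leaf (guess : ℕ)
  | node (j b : ℕ) (t1 t0 : DTree)

def DTree.run (k : ℕ) : DTree → ℕ → ℕ
  | .leaf g, _ => g
  | .node j b t1 t0, h => if feat k j b h then t1.run k h else t0.run k h

def DTree.cost (k : ℕ) : DTree → ℕ → ℕ
  | .leaf _, _ => 0
  | .node j b t1 t0, h => 1 + (if feat k j b h then t1.cost k h else t0.cost k h)

def DTree.allowed (k : ℕ) : DTree → Prop
  | .leaf _ => True
  | .node j b t1 t0 => 1 ≤ j ∧ j ≤ k ∧ b < 2 ^ (j - 1) ∧ t1.allowed k ∧ t0.allowed k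

/-! ### Auxiliary lemmas -/

lemma div_char (a b c : ℕ) (hb : 0 < b) : a / b = c ↔ c * b ≤ a ∧ a < c * b + b := by
  constructor
  · rintro rfl
    exact ⟨Nat.div_mul_le_self a b, Nat.lt_div_mul_add hb⟩
  · rintro ⟨h1, h2⟩
    exact Nat.div_eq_of_lt_le h1 (by rw [add_mul, one_mul]; exact h2)

lemma feat_iff (k j b h : ℕ) (hjk : j ≤ k) :
    feat k j b h = true ↔ h / 2 ^ (k - j) = (2 * b) := by
  have h2 : b * 2 ^ (k - j + 1) = (2 * b) * 2 ^ (k - j) := by ring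
  rw [feat, decide_eq_true_iff, div_char _ _ _ (Nat.two_pow_pos (k - j)), h2]

lemma divA (A s t : ℕ) (hA : 1 ≤ A) : (A * 2 ^ (s + t) - 1) / 2 ^ t = A * 2 ^ s - 1 := by
  have hp : (0:ℕ) < 2 ^ t := Nat.two_pow_pos _
  have h1 : (1:ℕ) ≤ A * 2 ^ s := Nat.one_le_iff_ne_zero.2 (by positivity)
  have key : A * 2 ^ (s + t) - 1 = (2 ^ t - 1) + (A * 2 ^ s - 1) * 2 ^ t := by
    have e : (A * 2 ^ s - 1) * 2 ^ t = A * 2 ^ (s + t) - 2 ^ t := by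
      rw [Nat.sub_mul, one_mul, pow_add]; ring_nf
    have hle : 2 ^ t ≤ A * 2 ^ (s + t) := by
      calc 2 ^ t ≤ 2 ^ (s + t) := Nat.pow_le_pow_right (by norm_num) (by omega)
        _ ≤ A * 2 ^ (s + t) := Nat.le_mul_of_pos_left _ (by omega)
    omega
  rw [key, Nat.add_mul_div_right _ _ hp, Nat.div_eq_of_lt (by omega), zero_add]

lemma divB (A m s : ℕ) (hA : 1 ≤ A) : (A * 2 ^ m - 1) / 2 ^ (m + s) = (A - 1) / 2 ^ s := by
  rw [pow_add, ← Nat.div_div_eq_div_mul]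
  have := divA A 0 m hA
  simp only [zero_add, pow_zero, mul_one] at this
  rw [this]

lemma divpair (b s : ℕ) : (2 * b) / 2 ^ (s + 1) = (2 * b + 1) / 2 ^ (s + 1) := by
  rw [pow_succ, mul_comm (2 ^ s) 2, ← Nat.div_div_eq_div_mul, ← Nat.div_div_eq_div_mul]
  congr 1
  omega

lemma feat_pair_self (k j b : ℕ) (hj : 1 ≤ j) (hjk : j ≤ k) :
    feat k j b ((2 * b + 1) * 2 ^ (k - j) - 1) = true ∧
    feat k j b ((2 * b + 2) * 2 ^ (k - j) - 1) = false := by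
  have hp : (0:ℕ) < 2 ^ (k - j) := Nat.two_pow_pos _
  have e1 : ((2 * b + 1) * 2 ^ (k - j) - 1) / 2 ^ (k - j) = 2 * b := by
    have := divA (2 * b + 1) 0 (k - j) (by omega)
    simpa using this
  have e2 : ((2 * b + 2) * 2 ^ (k - j) - 1) / 2 ^ (k - j) = 2 * b + 1 := by
    have := divA (2 * b + 2) 0 (k - j) (by omega)
    simpa using this
  constructor
  · rw [feat_iff _ _ _ _ hjk, e1]
  · rw [← Bool.not_eq_true, feat_iff _ _ _ _ hjk, e2]; omega

lemma feat_pair (k j b j' b' : ℕ) (hj : 1 ≤ j) (hjk : j ≤ k)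
    (hj' : 1 ≤ j') (hj'k : j' ≤ k) (hne : (j', b') ≠ (j, b)) :
    feat k j' b' ((2 * b + 1) * 2 ^ (k - j) - 1) =
    feat k j' b' ((2 * b + 2) * 2 ^ (k - j) - 1) := by
  set m := k - j with hm
  set m' := k - j' with hm'
  have hb1 : (1:ℕ) ≤ 2 * b + 1 := by omega
  have hb2 : (1:ℕ) ≤ 2 * b + 2 := by omega
  rcases lt_trichotomy m' m with hlt | heq | hgt
  · -- m' < m: both divs are odd, 2*b' is even; both feat are false
    obtain ⟨u, hu⟩ : ∃ u, m = u + 1 + m' := ⟨m - m' - 1, by omega⟩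
    have e1 : ((2 * b + 1) * 2 ^ m - 1) / 2 ^ m' = (2 * b + 1) * 2 ^ (u + 1) - 1 := by
      rw [hu, divA _ _ _ hb1]
    have e2 : ((2 * b + 2) * 2 ^ m - 1) / 2 ^ m' = (2 * b + 2) * 2 ^ (u + 1) - 1 := by
      rw [hu, divA _ _ _ hb2]
    have hodd : ∀ A : ℕ, 1 ≤ A → A * 2 ^ (u + 1) - 1 ≠ 2 * b' := by
      intro A hA hcontra
      have : A * 2 ^ (u + 1) = 2 * (A * 2 ^ u) := by ring
      have hpos : 1 ≤ A * 2 ^ u := Nat.one_le_iff_ne_zero.2 (by positivity)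
      omega
    have f1 : feat k j' b' ((2 * b + 1) * 2 ^ m - 1) = false := by
      rw [← Bool.not_eq_true, feat_iff _ _ _ _ hj'k, ← hm', e1]
      exact hodd _ hb1
    have f2 : feat k j' b' ((2 * b + 2) * 2 ^ m - 1) = false := by
      rw [← Bool.not_eq_true, feat_iff _ _ _ _ hj'k, ← hm', e2]
      exact hodd _ hb2
    rw [f1, f2]
  · -- m' = m hence j' = j, so b' ≠ b
    have hjj : j' = j := by omega
    have hbb : b' ≠ b := by
      intro hb; exact hne (by rw [hjj, hb])
    have e1 : ((2 * b + 1) * 2 ^ m - 1) / 2 ^ m' = 2 * b := by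
      rw [heq]; have := divA (2 * b + 1) 0 m hb1; simpa using this
    have e2 : ((2 * b + 2) * 2 ^ m - 1) / 2 ^ m' = 2 * b + 1 := by
      rw [heq]; have := divA (2 * b + 2) 0 m hb2; simpa using this
    have f1 : feat k j' b' ((2 * b + 1) * 2 ^ m - 1) = false := by
      rw [← Bool.not_eq_true, feat_iff _ _ _ _ hj'k, ← hm', e1]; omega
    have f2 : feat k j' b' ((2 * b + 2) * 2 ^ m - 1) = false := by
      rw [← Bool.not_eq_true, feat_iff _ _ _ _ hj'k, ← hm', e2]; omega
    rw [f1, f2]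
  · -- m < m': both divs are equal
    obtain ⟨s, hs⟩ : ∃ s, m' = m + (s + 1) := ⟨m' - m - 1, by omega⟩
    have e1 : ((2 * b + 1) * 2 ^ m - 1) / 2 ^ m' = (2 * b) / 2 ^ (s + 1) := by
      rw [hs, divB _ _ _ hb1]; norm_num
    have e2 : ((2 * b + 2) * 2 ^ m - 1) / 2 ^ m' = (2 * b + 1) / 2 ^ (s + 1) := by
      rw [hs, divB _ _ _ hb2]; norm_num
    have := divpair b s
    rw [show feat k j' b' ((2*b+1)*2^m - 1) = decide (((2*b+1)*2^m - 1) / 2^(k-j') = 2*b') from ?_,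
        show feat k j' b' ((2*b+2)*2^m - 1) = decide (((2*b+2)*2^m - 1) / 2^(k-j') = 2*b') from ?_]
    · rw [← hm', e1, e2, this]
    · rw [Bool.eq_iff_iff, decide_eq_true_iff, feat_iff _ _ _ _ hj'k]
    · rw [Bool.eq_iff_iff, decide_eq_true_iff, feat_iff _ _ _ _ hj'k]

def bt (k : ℕ) : ℕ → ℕ → DTree
  | 0, b => .leaf b
  | m + 1, b => .node (k - m) b (bt k m (2 * b)) (bt k m (2 * b + 1))

lemma bt_correct (k : ℕ) : ∀ m, m ≤ k → ∀ b h, b * 2 ^ m ≤ h → h < (b + 1) * 2 ^ m →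
    (bt k m b).run k h = h ∧ (bt k m b).cost k h = m := by
  intro m
  induction m with
  | zero =>
    intro _ b h h1 h2
    simp only [pow_zero, mul_one] at h1 h2
    simp only [bt, DTree.run, DTree.cost]
    exact ⟨by omega, trivial⟩
  | succ m ih =>
    intro hmk b h h1 h2
    have hkm : k - (k - m) = m := by omega
    have hf : feat k (k - m) b h = decide (2 * b * 2 ^ m ≤ h ∧ h < 2 * b * 2 ^ m + 2 ^ m) := by
      rw [feat, hkm]
      congr 2 <;> [skip; skip] <;> rw [show b * 2 ^ (m + 1) = 2 * b * 2 ^ m from by ring]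
    have e1 : b * 2 ^ (m + 1) = 2 * b * 2 ^ m := by ring
    have e2 : (b + 1) * 2 ^ (m + 1) = (2 * b + 1 + 1) * 2 ^ m := by ring
    rw [e1] at h1; rw [e2] at h2
    by_cases hc : 2 * b * 2 ^ m ≤ h ∧ h < 2 * b * 2 ^ m + 2 ^ m
    · have hft : feat k (k - m) b h = true := by rw [hf]; exact decide_eq_true hc
      have := ih (by omega) (2 * b) h hc.1 (by rw [add_mul, one_mul]; exact hc.2)
      simp only [bt, DTree.run, DTree.cost, hft, if_true]
      exact ⟨this.1, by omega⟩
    · have hff : feat k (k - m) b h = false := by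
        rw [hf]; exact decide_eq_false hc
      have hge : (2 * b + 1) * 2 ^ m ≤ h := by
        rw [add_mul, one_mul]; omega
      have := ih (by omega) (2 * b + 1) h hge h2
      simp only [bt, DTree.run, DTree.cost, hff, if_false, Bool.false_eq_true]
      exact ⟨this.1, by omega⟩

lemma bt_allowed (k : ℕ) : ∀ m, m ≤ k → ∀ b, b < 2 ^ (k - m) → (bt k m b).allowed k := by
  intro m
  induction m with
  | zero => intro _ b _; trivial
  | succ m ih =>
    intro hmk b hb
    have h1 : 1 ≤ k - m := by omega
    have e : k - m - 1 = k - (m + 1) := by omega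
    have e2 : 2 ^ (k - m) = 2 * 2 ^ (k - (m + 1)) := by
      rw [show k - m = (k - (m + 1)) + 1 from by omega]; ring
    refine ⟨h1, by omega, ?_, ih (by omega) _ ?_, ih (by omega) _ ?_⟩
    · rw [e]; exact hb
    · omega
    · omega

lemma geom_sum_Icc (k : ℕ) : ∑ j ∈ Finset.Icc 1 k, 2 ^ (j - 1) = 2 ^ k - 1 := by
  induction k with
  | zero => simp
  | succ k ih =>
    rw [Finset.sum_Icc_succ_top (by omega), ih]
    have : (1:ℕ) ≤ 2 ^ k := Nat.one_le_two_pow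
    simp only [Nat.add_sub_cancel]
    omega

def validS (k : ℕ) : Finset (ℕ × ℕ) :=
  (Finset.Icc 1 k).biUnion fun j => (Finset.range (2 ^ (j - 1))).image fun b => (j, b)

lemma mem_validS (k j b : ℕ) : (j, b) ∈ validS k ↔ 1 ≤ j ∧ j ≤ k ∧ b < 2 ^ (j - 1) := by
  simp only [validS, Finset.mem_biUnion, Finset.mem_Icc, Finset.mem_image, Finset.mem_range,
    Prod.mk.injEq]
  constructor
  · rintro ⟨j', ⟨hj1, hj2⟩, b', hb', rfl, rfl⟩; exact ⟨hj1, hj2, hb'⟩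
  · rintro ⟨h1, h2, h3⟩; exact ⟨j, ⟨h1, h2⟩, b, h3, rfl, rfl⟩

lemma card_validS (k : ℕ) : (validS k).card = 2 ^ k - 1 := by
  rw [validS, Finset.card_biUnion]
  · rw [← geom_sum_Icc]
    apply Finset.sum_congr rfl
    intro j _
    rw [Finset.card_image_of_injective _ (fun a b h => by simpa using h), Finset.card_range]
  · intro x _ y _ hxy
    simp only [Finset.disjoint_left, Finset.mem_image, Finset.mem_range]
    rintro a ⟨b1, _, rfl⟩ ⟨b2, _, h⟩
    exact hxy (congrArg Prod.fst h).symm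

lemma sq_le_two_pow (n : ℕ) (hn : 4 ≤ n) : n * n ≤ 2 ^ n := by
  induction n with
  | zero => omega
  | succ n ih =>
    rcases Nat.lt_or_ge n 4 with h | h
    · interval_cases n <;> omega
    · have h1 := ih h
      have h2 : 2 ^ (n + 1) = 2 ^ n + 2 ^ n := by ring
      nlinarith

/-- Adaptivity gap of the Theorem 1 construction.  For `N = 2^k` hypotheses with any
full-support prior `P`:
(1) the adaptive binary-search policy achieves zero expected 0/1 loss (it identifies
every hypothesis with certainty) with expected cost exactly `log₂ N = k`;
(2) any non-adaptive policy, given by a fixed feature set `S` and a decision rule `d`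
on the observed feature vector, achieving zero expected 0/1 loss must query at least
`N - 1` features (hence every cheaper non-adaptive policy fails to achieve zero loss);
(3) the resulting cost ratio `(N - 1) / log₂ N` tends to infinity as `N → ∞`. -/
theorem adaptivity_gap_unbounded (k : ℕ) (hk : 1 ≤ k) (P : ℕ → ℝ)
    (hP : ∀ h < 2 ^ k, 0 < P h)
    (hsum : ∑ h ∈ Finset.range (2 ^ k), P h = 1) :
    (∃ T : DTree, T.allowed k ∧ (∀ h < 2 ^ k, T.run k h = h) ∧
        ∑ h ∈ Finset.range (2 ^ k), P h * (T.cost k h : ℝ) = (k : ℝ)) ∧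
    (∀ S : Finset (ℕ × ℕ), (∀ q ∈ S, 1 ≤ q.1 ∧ q.1 ≤ k ∧ q.2 < 2 ^ (q.1 - 1)) →
      ∀ d : ((ℕ × ℕ) → Bool) → ℕ,
        (∑ h ∈ Finset.range (2 ^ k),
            P h * (if d (fun q => if q ∈ S then feat k q.1 q.2 h else false) = h
              then (0 : ℝ) else 1)) = 0 →
        2 ^ k - 1 ≤ S.card) ∧
    Filter.Tendsto (fun n : ℕ => ((2 ^ n - 1 : ℝ)) / (n : ℝ))
      Filter.atTop Filter.atTop := by
  have hN : (0:ℕ) < 2 ^ k := Nat.two_pow_pos _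
  refine ⟨?_, ?_, ?_⟩
  · -- (1) adaptive binary search
    refine ⟨bt k k 0, bt_allowed k k le_rfl 0 (by simp), ?_, ?_⟩
    · intro h hh
      exact (bt_correct k k le_rfl 0 h (by simp) (by simpa using hh)).1
    · have hc : ∀ h ∈ Finset.range (2 ^ k),
          P h * ((bt k k 0).cost k h : ℝ) = P h * k := by
        intro h hh
        rw [(bt_correct k k le_rfl 0 h (by simp)
          (by simpa using Finset.mem_range.1 hh)).2]
      rw [Finset.sum_congr rfl hc, ← Finset.sum_mul, hsum, one_mul]
  · -- (2) non-adaptive lower bound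
    intro S hS d hzero
    have hterm : ∀ h ∈ Finset.range (2 ^ k),
        P h * (if d (fun q => if q ∈ S then feat k q.1 q.2 h else false) = h
          then (0:ℝ) else 1) = 0 := by
      refine (Finset.sum_eq_zero_iff_of_nonneg ?_).1 hzero
      intro i hi
      have hp := (hP i (Finset.mem_range.1 hi)).le
      split_ifs
      · simp
      · rw [mul_one]; exact hp
    have hid : ∀ h, h < 2 ^ k →
        d (fun q => if q ∈ S then feat k q.1 q.2 h else false) = h := by
      intro h hh
      have := hterm h (Finset.mem_range.2 hh)
      by_contra hne
      rw [if_neg hne, mul_one] at this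
      exact absurd this (ne_of_gt (hP h hh))
    have hsub : validS k ⊆ S := by
      rintro ⟨j, b⟩ hq
      rw [mem_validS] at hq
      obtain ⟨hj, hjk, hb⟩ := hq
      set m := k - j with hm
      have hpm : (0:ℕ) < 2 ^ m := Nat.two_pow_pos _
      set h1 := (2 * b + 1) * 2 ^ m - 1 with hh1def
      set h2 := (2 * b + 2) * 2 ^ m - 1 with hh2def
      have hpos1 : 1 ≤ (2 * b + 1) * 2 ^ m := Nat.one_le_iff_ne_zero.2 (by positivity)
      have hadd : (2 * b + 1) * 2 ^ m + 2 ^ m = (2 * b + 2) * 2 ^ m := by ring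
      have hlt : h1 < h2 := by omega
      have hh2 : h2 < 2 ^ k := by
        have hbb : 2 * b + 2 ≤ 2 ^ j := by
          have : 2 ^ j = 2 ^ (j - 1) * 2 := by
            rw [← pow_succ]; congr 1; omega
          omega
        have hmul : (2 * b + 2) * 2 ^ m ≤ 2 ^ j * 2 ^ m := Nat.mul_le_mul_right _ hbb
        have hjm : 2 ^ j * 2 ^ m = 2 ^ k := by rw [← pow_add]; congr 1; omega
        omega
      have hh1 : h1 < 2 ^ k := lt_trans hlt hh2
      by_contra hnot
      have heq : (fun q : ℕ × ℕ => if q ∈ S then feat k q.1 q.2 h1 else false) =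
          (fun q : ℕ × ℕ => if q ∈ S then feat k q.1 q.2 h2 else false) := by
        funext q
        by_cases hqS : q ∈ S
        · obtain ⟨hq1, hq2, _⟩ := hS q hqS
          simp only [if_pos hqS]
          have hne' : (q.1, q.2) ≠ (j, b) := by
            intro hcontra
            apply hnot
            have hq' : q = (j, b) := by
              rcases q with ⟨a, c⟩
              simpa using hcontra
            rw [← hq']; exact hqS
          exact feat_pair k j b q.1 q.2 hj hjk hq1 hq2 hne'
        · simp [hqS]
      have : h1 = h2 := by rw [← hid h1 hh1, ← hid h2 hh2, heq]
      omega
    calc 2 ^ k - 1 = (validS k).card := (card_validS k).symm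
      _ ≤ S.card := Finset.card_le_card hsub
  · -- (3) unbounded ratio
    rw [Filter.tendsto_atTop]
    intro C
    filter_upwards [Filter.eventually_ge_atTop (max 4 (⌈C⌉₊ + 1))] with n hn
    have h4 : 4 ≤ n := le_trans (le_max_left _ _) hn
    have h4' : (4:ℝ) ≤ n := by exact_mod_cast h4
    have hCn : C ≤ (n:ℝ) - 1 := by
      have h1 : (⌈C⌉₊ + 1 : ℕ) ≤ n := le_trans (le_max_right _ _) hn
      have h2 : ((⌈C⌉₊:ℝ) + 1) ≤ (n:ℝ) := by exact_mod_cast h1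
      linarith [Nat.le_ceil C]
    have hsq : (n:ℝ) * n ≤ 2 ^ n := by exact_mod_cast sq_le_two_pow n h4
    have hn0 : (0:ℝ) < n := by linarith
    rw [le_div_iff₀ hn0]
    nlinarith [mul_le_mul_of_nonneg_right hCn hn0.le]
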